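/- If there is an isomorphism f from 𝔄 onto 𝔅, then ℭ has a nontrivial automorphism. In fact there is a bijection g : T₀ → T₁, defined inductively by g(∅₀) = ∅₁, g(η⌢⟨a⟩) = g(η)⌢⟨a⟩ when Suc(η) = Suc(g(η)), and g(η⌢⟨a⟩) = g(η)⌢⟨f(a)⟩ (respectively g(η)⌢⟨f⁻¹(a)⟩) when Suc(η) = A, Suc(g(η)) = B (respectively Suc(η) = B, Suc(g(η)) = A), such that g ∪ g⁻¹ is an automorphism of ℭ interchanging T₀ and T₁. -/

import Mathlib

namespace CTree

/-- A tree on `X`: a nonempty set of finite sequences closed under initial segments. -/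
def IsTree {X : Type*} (T : Set (List X)) : Prop :=
  T.Nonempty ∧ ∀ η ∈ T, ∀ ν : List X, ν <+: η → ν ∈ T

/-- `Suc_T(η) = {x : η⌢⟨x⟩ ∈ T}`. -/
def suc {X : Type*} (T : Set (List X)) (η : List X) : Set X :=
  {x | η ++ [x] ∈ T}

/-- The universe `C = T₀ ∪ T₁` of the structure `ℭ`: nodes are sequences over
`A ∪ B` (realized as `A ⊕ B`) tagged by which tree they belong to; the tags make
the two trees (in particular their roots `∅₀, ∅₁`) disjoint. -/
def Node {A B : Type*} (T : Bool → Set (List (A ⊕ B))) : Type _ :=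
  {p : Bool × List (A ⊕ B) // p.2 ∈ T p.1}

/-- The interpretation `≤^ℭ`: the union of the two tree orderings (nodes of
different trees are incomparable). -/
def nle {A B : Type*} {T : Bool → Set (List (A ⊕ B))} (p q : Node T) : Prop :=
  p.val.1 = q.val.1 ∧ p.val.2 <+: q.val.2

/-- The interpretation `R^ℭ` of an `n`-ary relation symbol `R` of `L`:
the tuples `(η⌢⟨a₁⟩, …, η⌢⟨aₙ⟩)` where `η ∈ T₀ ∪ T₁` and, if `Suc(η) = A` then
`(a₁, …, aₙ) ∈ R^𝔄`, while if `Suc(η) = B` then `(a₁, …, aₙ) ∈ R^𝔅`. -/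
def RC {A B : Type*} {ι : Type*} {ar : ι → ℕ}
    (RA : ∀ i, (Fin (ar i) → A) → Prop) (RB : ∀ i, (Fin (ar i) → B) → Prop)
    (T : Bool → Set (List (A ⊕ B))) (i : ι) (v : Fin (ar i) → Node T) : Prop :=
  ∃ (l : Bool) (η : List (A ⊕ B)), η ∈ T l ∧
    ((suc (T l) η = Set.range Sum.inl ∧
       ∃ a : Fin (ar i) → A, (∀ k, (v k).val = (l, η ++ [Sum.inl (a k)])) ∧ RA i a) ∨
     (suc (T l) η = Set.range Sum.inr ∧
       ∃ b : Fin (ar i) → B, (∀ k, (v k).val = (l, η ++ [Sum.inr (b k)])) ∧ RB i b))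

/-- An automorphism of `ℭ`: a bijection of the universe preserving `≤^ℭ` and all
the relations `R^ℭ` (in both directions). -/
def IsAut {A B : Type*} {ι : Type*} {ar : ι → ℕ}
    (RA : ∀ i, (Fin (ar i) → A) → Prop) (RB : ∀ i, (Fin (ar i) → B) → Prop)
    (T : Bool → Set (List (A ⊕ B))) (g : Node T ≃ Node T) : Prop :=
  (∀ p q : Node T, nle p q ↔ nle (g p) (g q)) ∧
  (∀ i (v : Fin (ar i) → Node T), RC RA RB T i v ↔ RC RA RB T i (g ∘ v))

end CTree


namespace CTreeAux

open CTree

variable {A B : Type*} (f : A ≃ B) (T : Bool → Set (List (A ⊕ B)))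

open scoped Classical

def phi (f : A ≃ B) : A ⊕ B → A ⊕ B :=
  Sum.elim (fun a => Sum.inr (f a)) (fun b => Sum.inl (f.symm b))

@[simp] lemma phi_phi (x : A ⊕ B) : phi f (phi f x) = x := by
  cases x <;> simp [phi]

noncomputable def tl (l : Bool) :
    List (A ⊕ B) → List (A ⊕ B) → List (A ⊕ B) → List (A ⊕ B)
  | _, _, [] => []
  | η, ν, x :: r =>
    (if CTree.suc (T l) η = CTree.suc (T (!l)) ν then x else phi f x) ::
      tl l (η ++ [x])
        (ν ++ [if CTree.suc (T l) η = CTree.suc (T (!l)) ν then x else phi f x]) r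

lemma tl_inv (l : Bool) : ∀ (r η ν : List (A ⊕ B)),
    tl f T (!l) ν η (tl f T l η ν r) = r := by
  intro r
  induction r with
  | nil => intro η ν; simp [tl]
  | cons x r ih =>
    intro η ν
    by_cases h : CTree.suc (T l) η = CTree.suc (T (!l)) ν
    · have h' : CTree.suc (T (!l)) ν = CTree.suc (T (!(!l))) η := by
        rw [Bool.not_not]; exact h.symm
      simp only [tl, if_pos h, if_pos h', ih]
    · have h' : ¬ CTree.suc (T (!l)) ν = CTree.suc (T (!(!l))) η := by
        rw [Bool.not_not]; exact fun hh => h hh.symm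
      simp only [tl, if_neg h, if_neg h', phi_phi, ih]

lemma tl_append (l : Bool) : ∀ (r₁ r₂ η ν : List (A ⊕ B)),
    tl f T l η ν (r₁ ++ r₂) =
      tl f T l η ν r₁ ++ tl f T l (η ++ r₁) (ν ++ tl f T l η ν r₁) r₂ := by
  intro r₁
  induction r₁ with
  | nil => intro r₂ η ν; simp [tl]
  | cons x r ih =>
    intro r₂ η ν
    simp only [List.cons_append, tl, List.append_eq]
    rw [ih]
    simp [List.append_assoc]

lemma tl_singleton (l : Bool) (η ν : List (A ⊕ B)) (x : A ⊕ B) :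
    tl f T l η ν [x] =
      [if CTree.suc (T l) η = CTree.suc (T (!l)) ν then x else phi f x] := by
  simp [tl]

lemma tl_snoc (l : Bool) (η ν r : List (A ⊕ B)) (x : A ⊕ B) :
    tl f T l η ν (r ++ [x]) = tl f T l η ν r ++
      [if CTree.suc (T l) (η ++ r) = CTree.suc (T (!l)) (ν ++ tl f T l η ν r)
        then x else phi f x] := by
  rw [tl_append, tl_singleton]

lemma range_inl_ne_inr [Nonempty A] [Nonempty B] :
    (Set.range (Sum.inl : A → A ⊕ B)) ≠ Set.range Sum.inr := by
  intro h
  obtain ⟨a⟩ := ‹Nonempty A›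
  have : (Sum.inl a : A ⊕ B) ∈ Set.range (Sum.inr : B → A ⊕ B) := by
    rw [← h]; exact ⟨a, rfl⟩
  obtain ⟨b, hb⟩ := this
  exact absurd hb (by simp)

lemma tl_mem [Nonempty A] [Nonempty B]
    (hT : ∀ l, CTree.IsTree (T l))
    (hsuc : ∀ l, ∀ η ∈ T l, CTree.suc (T l) η = Set.range Sum.inl ∨
      CTree.suc (T l) η = Set.range Sum.inr) (l : Bool) :
    ∀ (r η ν : List (A ⊕ B)), η ∈ T l → ν ∈ T (!l) → η ++ r ∈ T l →
      ν ++ tl f T l η ν r ∈ T (!l) := by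
  intro r
  induction r with
  | nil => intro η ν _ hν _; simpa [tl] using hν
  | cons x r ih =>
    intro η ν hη hν hηr
    have hx : η ++ [x] ∈ T l :=
      (hT l).2 _ hηr _ ⟨r, by simp⟩
    set x' := if CTree.suc (T l) η = CTree.suc (T (!l)) ν then x else phi f x with hx'
    have hν' : ν ++ [x'] ∈ T (!l) := by
      by_cases h : CTree.suc (T l) η = CTree.suc (T (!l)) ν
      · rw [hx', if_pos h]
        have : x ∈ CTree.suc (T l) η := hx
        rw [h] at this; exact this
      · rw [hx', if_neg h]
        have hxs : x ∈ CTree.suc (T l) η := hx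
        rcases hsuc l η hη with h1 | h1 <;> rcases hsuc (!l) ν hν with h2 | h2
        · exact absurd (h1.trans h2.symm) h
        · rw [h1] at hxs; obtain ⟨a, rfl⟩ := hxs
          have : phi f (Sum.inl a) ∈ CTree.suc (T (!l)) ν := by
            rw [h2]; exact ⟨f a, rfl⟩
          exact this
        · rw [h1] at hxs; obtain ⟨b, rfl⟩ := hxs
          have : phi f (Sum.inr b) ∈ CTree.suc (T (!l)) ν := by
            rw [h2]; exact ⟨f.symm b, rfl⟩
          exact this
        · exact absurd (h1.trans h2.symm) h
    have := ih (η ++ [x]) (ν ++ [x']) hx hν' (by simpa using hηr)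
    simpa [tl, ← hx', List.append_assoc] using this

lemma nil_mem (hT : ∀ l, CTree.IsTree (T l)) (l : Bool) : ([] : List (A ⊕ B)) ∈ T l := by
  obtain ⟨η, hη⟩ := (hT l).1
  exact (hT l).2 η hη [] (List.nil_prefix)

end CTreeAux


open CTreeAux in
/-- If `f : 𝔄 ≅ 𝔅` is an isomorphism, then `ℭ` has a nontrivial automorphism:
there is a bijection `g` of `C`, with `g(∅₀) = ∅₁`, `g(η⌢⟨a⟩) = g(η)⌢⟨a⟩` when
`Suc(η) = Suc(g(η))`, `g(η⌢⟨a⟩) = g(η)⌢⟨f(a)⟩` when `Suc(η) = A`,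
`Suc(g(η)) = B`, and `g(η⌢⟨b⟩) = g(η)⌢⟨f⁻¹(b)⟩` in the mirror case, which is an
automorphism of `ℭ` interchanging `T₀` and `T₁`. -/
theorem stmt11 {A B : Type*} [Nonempty A] [Nonempty B]
    {ι : Type*} {ar : ι → ℕ}
    (RA : ∀ i, (Fin (ar i) → A) → Prop) (RB : ∀ i, (Fin (ar i) → B) → Prop)
    (T : Bool → Set (List (A ⊕ B)))
    (hT : ∀ l, CTree.IsTree (T l))
    (hsuc : ∀ l, ∀ η ∈ T l, CTree.suc (T l) η = Set.range Sum.inl ∨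
      CTree.suc (T l) η = Set.range Sum.inr)
    (hroot0 : CTree.suc (T false) [] = Set.range Sum.inl)
    (hroot1 : CTree.suc (T true) [] = Set.range Sum.inr)
    (f : A ≃ B)
    (hf : ∀ i (a : Fin (ar i) → A), RA i a ↔ RB i (fun k => f (a k))) :
    ∃ g : CTree.Node T ≃ CTree.Node T,
      CTree.IsAut RA RB T g ∧
      (∀ c : CTree.Node T, (g c).val.1 = !c.val.1) ∧
      (∃ c : CTree.Node T, g c ≠ c) ∧
      (∀ c : CTree.Node T, c.val = (false, []) → (g c).val = (true, [])) ∧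
      (∀ (c c' : CTree.Node T) (x : A ⊕ B),
        c'.val = (c.val.1, c.val.2 ++ [x]) →
        CTree.suc (T c.val.1) c.val.2 = CTree.suc (T (g c).val.1) (g c).val.2 →
        (g c').val = ((g c).val.1, (g c).val.2 ++ [x])) ∧
      (∀ (c c' : CTree.Node T) (a : A),
        c'.val = (c.val.1, c.val.2 ++ [Sum.inl a]) →
        CTree.suc (T c.val.1) c.val.2 = Set.range Sum.inl →
        CTree.suc (T (g c).val.1) (g c).val.2 = Set.range Sum.inr →
        (g c').val = ((g c).val.1, (g c).val.2 ++ [Sum.inr (f a)])) ∧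
      (∀ (c c' : CTree.Node T) (b : B),
        c'.val = (c.val.1, c.val.2 ++ [Sum.inr b]) →
        CTree.suc (T c.val.1) c.val.2 = Set.range Sum.inr →
        CTree.suc (T (g c).val.1) (g c).val.2 = Set.range Sum.inl →
        (g c').val = ((g c).val.1, (g c).val.2 ++ [Sum.inl (f.symm b)])) := by
  classical
  have hnil : ∀ l, ([] : List (A ⊕ B)) ∈ T l := nil_mem T hT
  have memg : ∀ (c : CTree.Node T), tl f T c.val.1 [] [] c.val.2 ∈ T (!c.val.1) := by
    intro c
    have := tl_mem f T hT hsuc c.val.1 c.val.2 [] []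
      (hnil _) (hnil _) (by simpa using c.property)
    simpa using this
  let g0 : CTree.Node T → CTree.Node T :=
    fun c => ⟨(!c.val.1, tl f T c.val.1 [] [] c.val.2), memg c⟩
  have hval : ∀ c : CTree.Node T,
      (g0 c).val = (!c.val.1, tl f T c.val.1 [] [] c.val.2) := fun _ => rfl
  have hgg : ∀ c, g0 (g0 c) = c := by
    intro c
    refine Subtype.ext ?_
    show ((!(!c.val.1) : Bool),
      tl f T (!c.val.1) [] [] (tl f T c.val.1 [] [] c.val.2)) = c.val
    rw [Bool.not_not, tl_inv f T c.val.1 c.val.2 [] []]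
  have hgsnoc : ∀ (l : Bool) (η : List (A ⊕ B)) (x : A ⊕ B),
      tl f T l [] [] (η ++ [x]) = tl f T l [] [] η ++
        [if CTree.suc (T l) η = CTree.suc (T (!l)) (tl f T l [] [] η)
          then x else phi f x] := by
    intro l η x
    simpa using tl_snoc f T l [] [] η x
  have hmono : ∀ p q : CTree.Node T, CTree.nle p q → CTree.nle (g0 p) (g0 q) := by
    rintro p q ⟨h1, r, h2⟩
    refine ⟨by simp [hval, h1], ?_⟩
    show tl f T p.val.1 [] [] p.val.2 <+: tl f T q.val.1 [] [] q.val.2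
    rw [← h1, ← h2, tl_append]
    exact ⟨_, rfl⟩
  have hRCf : ∀ i (v : Fin (ar i) → CTree.Node T),
      CTree.RC RA RB T i v → CTree.RC RA RB T i (g0 ∘ v) := by
    rintro i v ⟨l, η, hη, hcase⟩
    have hν : tl f T l [] [] η ∈ T (!l) := by
      simpa using tl_mem f T hT hsuc l η [] [] (hnil l) (hnil (!l)) (by simpa using hη)
    refine ⟨!l, tl f T l [] [] η, hν, ?_⟩
    rcases hsuc (!l) _ hν with hν1 | hν2
    · rcases hcase with ⟨hsA, a, hva, hRA⟩ | ⟨hsB, b, hvb, hRB⟩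
      · refine Or.inl ⟨hν1, a, fun k => ?_, hRA⟩
        show (g0 (v k)).val = _
        rw [hval, hva k]
        simp only
        rw [hgsnoc, if_pos (hsA.trans hν1.symm)]
      · refine Or.inl ⟨hν1, fun k => f.symm (b k), fun k => ?_, ?_⟩
        · show (g0 (v k)).val = _
          rw [hval, hvb k]
          simp only
          rw [hgsnoc, if_neg (fun hh => range_inl_ne_inr ((hν1.symm.trans (hsB.symm.trans hh).symm)))]
          simp [phi]
        · have := (hf i (fun k => f.symm (b k))).mpr
          simp only [Equiv.apply_symm_apply] at this
          exact this hRB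
    · rcases hcase with ⟨hsA, a, hva, hRA⟩ | ⟨hsB, b, hvb, hRB⟩
      · refine Or.inr ⟨hν2, fun k => f (a k), fun k => ?_, (hf i a).mp hRA⟩
        show (g0 (v k)).val = _
        rw [hval, hva k]
        simp only
        rw [hgsnoc, if_neg (fun hh => range_inl_ne_inr (hsA.symm.trans (hh.trans hν2)))]
        simp [phi]
      · refine Or.inr ⟨hν2, b, fun k => ?_, hRB⟩
        show (g0 (v k)).val = _
        rw [hval, hvb k]
        simp only
        rw [hgsnoc, if_pos (hsB.trans hν2.symm)]
  refine ⟨⟨g0, g0, hgg, hgg⟩, ⟨?_, ?_⟩, ?_, ?_, ?_, ?_, ?_, ?_⟩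
  · intro p q
    simp only [Equiv.coe_fn_mk]
    exact ⟨hmono p q, fun h => by have := hmono _ _ h; rwa [hgg, hgg] at this⟩
  · intro i v
    simp only [Equiv.coe_fn_mk]
    refine ⟨hRCf i v, fun h => ?_⟩
    have := hRCf i _ h
    have h2 : g0 ∘ (g0 ∘ v) = v := funext fun k => hgg (v k)
    rwa [h2] at this
  · intro c; rfl
  · refine ⟨⟨(false, []), hnil false⟩, fun h => ?_⟩
    have := congrArg (fun c : CTree.Node T => c.val.1) h
    exact absurd (this : (!false) = false) (by decide : ¬((!false) = false))
  · intro c hc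
    show (!c.val.1, tl f T c.val.1 [] [] c.val.2) = (true, [])
    rw [hc]
    simp [tl]
  · intro c c' x hc' hsuceq
    have hcond : CTree.suc (T c.val.1) c.val.2 =
        CTree.suc (T (!c.val.1)) (tl f T c.val.1 [] [] c.val.2) := hsuceq
    show (!c'.val.1, tl f T c'.val.1 [] [] c'.val.2) = _
    rw [hc']
    simp only
    rw [hgsnoc, if_pos hcond]
    rfl
  · intro c c' a hc' h1 h2
    have h2' : CTree.suc (T (!c.val.1)) (tl f T c.val.1 [] [] c.val.2) =
        Set.range Sum.inr := h2
    show (!c'.val.1, tl f T c'.val.1 [] [] c'.val.2) = _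
    rw [hc']
    simp only
    rw [hgsnoc, if_neg (fun hh => range_inl_ne_inr (h1.symm.trans (hh.trans h2')))]
    rfl
  · intro c c' b hc' h1 h2
    have h2' : CTree.suc (T (!c.val.1)) (tl f T c.val.1 [] [] c.val.2) =
        Set.range Sum.inl := h2
    show (!c'.val.1, tl f T c'.val.1 [] [] c'.val.2) = _
    rw [hc']
    simp only
    rw [hgsnoc, if_neg (fun hh => range_inl_ne_inr (h2'.symm.trans (h1.symm.trans hh).symm))]
    rfl
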